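/- Define f(x,y) = (1 - y/(3 sqrt(x^2+y^2)))((x^2+y^2)^2 - 2(x^2+y^2)) for (x,y) != (0,0) and f(0,0)=0. For every beta in [-pi/3, pi/3], f(sin(beta/2)cos(beta/2), -sin(beta/2)sin(beta/2)) - f(sin(beta), cos(beta)) >= 5/32. In particular, the linear interpolation from (sin beta, cos beta) to the global minimizer (0,-1) has a point with loss strictly higher (by at least 5/32) than a point earlier on the path, so the loss interpolation is non-monotonic. -/

import Mathlib

open Real

/-- The loss interpolation for the easy example is non-monotonic: for
`β ∈ [-π/3, π/3]`, the midpoint of the segment from `(sin β, cos β)` to the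
global minimizer `(0,-1)` has `f`-value at least `5/32` larger than the
starting point `(sin β, cos β)`. -/
theorem stmt_6
    (f : ℝ → ℝ → ℝ)
    (hf : ∀ x y : ℝ, f x y =
      if x = 0 ∧ y = 0 then 0
      else (1 - y / (3 * Real.sqrt (x ^ 2 + y ^ 2))) *
        ((x ^ 2 + y ^ 2) ^ 2 - 2 * (x ^ 2 + y ^ 2))) :
    ∀ β ∈ Set.Icc (-(π / 3)) (π / 3),
      f (Real.sin (β / 2) * Real.cos (β / 2)) (-Real.sin (β / 2) * Real.sin (β / 2)) -
        f (Real.sin β) (Real.cos β) ≥ 5 / 32 := by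
  intro β hβ
  obtain ⟨h1, h2⟩ := hβ
  have hπ := Real.pi_pos
  set t := Real.sin (β / 2) with ht
  -- bound |t| ≤ 1/2
  have htle : t ≤ 1 / 2 := by
    have := Real.sin_le_sin_of_le_of_le_pi_div_two
      (x := β / 2) (y := π / 6) (by nlinarith) (by nlinarith) (by nlinarith)
    rwa [Real.sin_pi_div_six] at this
  have htge : -(1 / 2) ≤ t := by
    have := Real.sin_le_sin_of_le_of_le_pi_div_two
      (x := -(π / 6)) (y := β / 2) (by nlinarith) (by nlinarith) (by nlinarith)
    rwa [Real.sin_neg, Real.sin_pi_div_six] at this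
  -- value at start point
  have hsc : Real.sin β ^ 2 + Real.cos β ^ 2 = 1 := Real.sin_sq_add_cos_sq β
  have hstart : f (Real.sin β) (Real.cos β) = Real.cos β / 3 - 1 := by
    rw [hf]
    have hne : ¬(Real.sin β = 0 ∧ Real.cos β = 0) := by
      rintro ⟨hs, hc⟩
      rw [hs, hc] at hsc; norm_num at hsc
    rw [if_neg hne, hsc, Real.sqrt_one]
    ring
  have hstart' : f (Real.sin β) (Real.cos β) ≤ -(2 / 3) := by
    rw [hstart]
    have := Real.cos_le_one β
    linarith
  -- value at midpoint
  have hsq : (t * Real.cos (β / 2)) ^ 2 + (-t * t) ^ 2 = t ^ 2 := by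
    have := Real.sin_sq_add_cos_sq (β / 2)
    nlinarith [this]
  have hmid : f (t * Real.cos (β / 2)) (-t * t) ≥ -(49 / 96) := by
    rw [hf]
    by_cases h0 : t = 0
    · rw [if_pos ⟨by rw [h0]; ring, by rw [h0]; ring⟩]; norm_num
    · have hne : ¬(t * Real.cos (β / 2) = 0 ∧ -t * t = 0) := by
        rintro ⟨_, hy⟩
        have : t * t ≠ 0 := mul_ne_zero h0 h0
        simp at hy; tauto
      rw [if_neg hne, hsq, Real.sqrt_sq_eq_abs]
      have habs : (0:ℝ) < |t| := abs_pos.mpr h0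
      have habs2 : |t| ≤ 1 / 2 := abs_le.mpr ⟨htge, htle⟩
      have hts : t * t = |t| * |t| := (abs_mul_abs_self t).symm
      have hts2 : t ^ 2 = |t| ^ 2 := (sq_abs t).symm
      have hdiv : -t * t / (3 * |t|) = -(|t| / 3) := by
        rw [show -t * t = -(t * t) by ring, hts]
        field_simp
      rw [hdiv, hts2]
      have hA : (0:ℝ) ≤ (1/2 - |t|) * (98 + 196*|t| + 8*|t|^2 - 112*|t|^3 - 32*|t|^4) := by
        apply mul_nonneg (by linarith)
        nlinarith [habs.le, mul_nonneg habs.le habs.le, mul_nonneg (mul_nonneg habs.le habs.le) habs.le]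
      nlinarith [hA]
  linarith
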